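/- Let (A, B) be an X-mutation pair in C and suppose X is rigid, i.e. Hom_C(X₁, X₂⟦1⟧) = 0 for all objects X₁, X₂ of X. Then Hom_C(X', A⟦1⟧) = 0 for every object X' of X and every object A of A, and Hom_C(B, X'⟦1⟧) = 0 for every object B of B and every object X' of X. -/

import Mathlib

/-!
Common definitions: the ideal of morphisms factoring through a subcategory `X`
(given as a set of objects of `C`), `X`-monic and `X`-epic morphisms, left and
right `X`-approximations, additive subcategories closed under isomorphisms,
direct sums and direct summands, and the additive quotient category `C/X`
(realized via `CategoryTheory.Quotient` of the relation `xRel X`).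
-/

open CategoryTheory Category Limits Pretriangulated

universe v u

namespace PaperStmt

variable {C : Type u} [Category.{v} C]

/-- `f` factors through an object of `X`. -/
def FactorsThru (X : Set C) {A B : C} (f : A ⟶ B) : Prop :=
  ∃ (M : C) (g : A ⟶ M) (h : M ⟶ B), M ∈ X ∧ g ≫ h = f

/-- `f : A ⟶ B` is `X`-monic: the map `Hom(B, X') → Hom(A, X')`, `g ↦ g ∘ f`,
is surjective for every object `X'` of `X`. -/
def IsXMonic (X : Set C) {A B : C} (f : A ⟶ B) : Prop :=
  ∀ ⦃X' : C⦄, X' ∈ X → ∀ g : A ⟶ X', ∃ h : B ⟶ X', f ≫ h = g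

/-- `f : A ⟶ B` is `X`-epic: the map `Hom(X', A) → Hom(X', B)`, `g ↦ f ∘ g`,
is surjective for every object `X'` of `X`. -/
def IsXEpic (X : Set C) {A B : C} (f : A ⟶ B) : Prop :=
  ∀ ⦃X' : C⦄, X' ∈ X → ∀ g : X' ⟶ B, ∃ h : X' ⟶ A, h ≫ f = g

/-- `α : A ⟶ X₀` is a left `X`-approximation of `A`: `X₀` lies in `X` and every
morphism from `A` to an object of `X` factors through `α`. -/
def IsLeftApprox (X : Set C) {A X₀ : C} (α : A ⟶ X₀) : Prop :=
  X₀ ∈ X ∧ IsXMonic X α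

/-- `β : X₀ ⟶ B` is a right `X`-approximation of `B`: `X₀` lies in `X` and every
morphism from an object of `X` to `B` factors through `β`. -/
def IsRightApprox (X : Set C) {X₀ B : C} (β : X₀ ⟶ B) : Prop :=
  X₀ ∈ X ∧ IsXEpic X β

/-- `X` is (the object class of) a full additive subcategory of `C`, closed
under isomorphisms, finite direct sums and direct summands. -/
structure IsAdditiveClosedSubcat [Preadditive C] [HasBinaryBiproducts C] (X : Set C) :
    Prop where
  zero_mem : ∀ Z : C, IsZero Z → Z ∈ X
  iso_closed : ∀ {A B : C}, (A ≅ B) → A ∈ X → B ∈ X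
  sum_closed : ∀ {A B : C}, A ∈ X → B ∈ X → (A ⊞ B) ∈ X
  summand_closed : ∀ {A B : C}, (A ⊞ B) ∈ X → A ∈ X

/-- Two morphisms are identified in the quotient category `C/X` precisely when
their difference factors through an object of `X`. -/
def xRel [Preadditive C] (X : Set C) : HomRel C :=
  fun _ _ f g => FactorsThru X (f - g)

section Triangulated

variable [Preadditive C] [HasZeroObject C] [HasShift C ℤ]
  [∀ n : ℤ, (shiftFunctor C n).Additive] [Pretriangulated C]

/-- `(𝒜, ℬ)` is an `X`-mutation pair in the triangulated category `C`. -/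
def IsMutationPair (X 𝒜 ℬ : Set C) : Prop :=
  X ⊆ 𝒜 ∧ X ⊆ ℬ ∧
  (∀ A ∈ 𝒜, ∃ (X₀ B' : C) (α : A ⟶ X₀) (β : X₀ ⟶ B') (δ : B' ⟶ A⟦(1 : ℤ)⟧),
      B' ∈ ℬ ∧ (Triangle.mk α β δ ∈ distTriang C) ∧
      IsLeftApprox X α ∧ IsRightApprox X β) ∧
  (∀ B ∈ ℬ, ∃ (A' X₀ : C) (α : A' ⟶ X₀) (β : X₀ ⟶ B) (δ : B ⟶ A'⟦(1 : ℤ)⟧),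
      A' ∈ 𝒜 ∧ (Triangle.mk α β δ ∈ distTriang C) ∧
      IsLeftApprox X α ∧ IsRightApprox X β)

end Triangulated

/-- if `(𝒜, ℬ)` is an `X`-mutation pair and `X` is rigid
(`Hom(X₁, X₂⟦1⟧) = 0` for `X₁, X₂ ∈ X`), then `Hom(X', A⟦1⟧) = 0` for `X' ∈ X`,
`A ∈ 𝒜`, and `Hom(B, X'⟦1⟧) = 0` for `B ∈ ℬ`, `X' ∈ X`. -/
theorem statement0 [Preadditive C] [HasZeroObject C] [HasShift C ℤ]
    [∀ n : ℤ, (shiftFunctor C n).Additive] [Pretriangulated C] [HasBinaryBiproducts C]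
    (X 𝒜 ℬ : Set C) (hX : IsAdditiveClosedSubcat X)
    (hmut : IsMutationPair X 𝒜 ℬ)
    (hrigid : ∀ X₁ ∈ X, ∀ X₂ ∈ X, ∀ f : X₁ ⟶ (X₂⟦(1 : ℤ)⟧), f = 0) :
    (∀ X' ∈ X, ∀ A ∈ 𝒜, ∀ f : X' ⟶ (A⟦(1 : ℤ)⟧), f = 0) ∧
    (∀ B ∈ ℬ, ∀ X' ∈ X, ∀ f : B ⟶ (X'⟦(1 : ℤ)⟧), f = 0) := by
  obtain ⟨hXA, hXB, h1, h2⟩ := hmut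
  constructor
  · intro X' hX' A hA f
    obtain ⟨X₀, B', α, β, δ, hB', hT, ⟨hX₀, _⟩, ⟨_, hβ⟩⟩ := h1 A hA
    have hfα : f ≫ (Triangle.mk α β δ).mor₁⟦(1:ℤ)⟧' = 0 :=
      hrigid X' hX' X₀ hX₀ _
    obtain ⟨g, hg⟩ := Triangle.coyoneda_exact₁ _ hT f hfα
    obtain ⟨h, hh⟩ := hβ hX' g
    have z := comp_distTriang_mor_zero₂₃ _ hT
    change β ≫ δ = 0 at z
    rw [hg, ← hh]
    change (h ≫ β) ≫ δ = 0
    rw [assoc, z, comp_zero]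
  · intro B hB X' hX' f
    obtain ⟨A', X₀, α, β, δ, hA', hT, ⟨hX₀, hα⟩, _⟩ := h2 B hB
    have hβf : (Triangle.mk α β δ).mor₂ ≫ f = 0 := hrigid X₀ hX₀ X' hX' _
    obtain ⟨g, hg⟩ := Triangle.yoneda_exact₃ _ hT f hβf
    obtain ⟨h, hh⟩ : ∃ h : A' ⟶ X', h⟦(1:ℤ)⟧' = g :=
      ⟨(shiftFunctor C (1:ℤ)).preimage g, (shiftFunctor C (1:ℤ)).map_preimage g⟩
    obtain ⟨k, hk⟩ := hα hX' h
    have z := comp_distTriang_mor_zero₃₁ _ hT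
    change δ ≫ α⟦(1:ℤ)⟧' = 0 at z
    change f = δ ≫ g at hg
    rw [hg, ← hh, ← hk, Functor.map_comp, ← assoc]
    change (δ ≫ α⟦(1:ℤ)⟧') ≫ k⟦(1:ℤ)⟧' = 0
    rw [z, zero_comp]

end PaperStmt
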